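/- For every real number ε > 0, there exists a connected, claw-free, cubic graph G with F_t(G)/F(G) > 2 − ε; in particular, the bound F_t(G)/F(G) ≤ 2 for connected claw-free cubic graphs is asymptotically best possible. -/

import Mathlib

/-- A set `T` of (colored) vertices is closed under the forcing rule: whenever a colored
vertex `v ∈ T` has the property that all of its neighbors outside `T` are equal to `w`
(i.e. `w` is its unique non-colored neighbor, if `w ∉ T`), then `w ∈ T`. -/
def ForcingClosed {V : Type*} (G : SimpleGraph V) (T : Set V) : Prop :=
  ∀ v ∈ T, ∀ w, G.Adj v w → (∀ u, G.Adj v u → u ∉ T → u = w) → w ∈ T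

/-- `S` is a (zero) forcing set of `G`: iterating the forcing process starting from `S`
colors all vertices; equivalently, every forcing-closed superset of `S` is everything. -/
def IsForcingSet {V : Type*} (G : SimpleGraph V) (S : Set V) : Prop :=
  ∀ T : Set V, S ⊆ T → ForcingClosed G T → ∀ v, v ∈ T

/-- `S` is a total forcing set of `G`: a forcing set whose induced subgraph has no
isolated vertex. -/
def IsTotalForcingSet {V : Type*} (G : SimpleGraph V) (S : Set V) : Prop :=
  IsForcingSet G S ∧ ∀ v ∈ S, ∃ w ∈ S, G.Adj v w

/-- The forcing number `F(G)`: minimum cardinality of a forcing set. -/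
noncomputable def forcingNumber {V : Type*} (G : SimpleGraph V) : ℕ :=
  sInf {n : ℕ | ∃ S : Set V, IsForcingSet G S ∧ S.ncard = n}

/-- The total forcing number `F_t(G)`: minimum cardinality of a total forcing set. -/
noncomputable def totalForcingNumber {V : Type*} (G : SimpleGraph V) : ℕ :=
  sInf {n : ℕ | ∃ S : Set V, IsTotalForcingSet G S ∧ S.ncard = n}

/-- `G` is cubic (3-regular): every vertex has exactly 3 neighbors. -/
def IsCubic {V : Type*} (G : SimpleGraph V) : Prop := ∀ v, (G.neighborSet v).ncard = 3

/-- `G` is claw-free: it has no induced `K_{1,3}`. -/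
def ClawFree {V : Type*} (G : SimpleGraph V) : Prop :=
  ¬ ∃ v a b c : V, G.Adj v a ∧ G.Adj v b ∧ G.Adj v c ∧
    a ≠ b ∧ a ≠ c ∧ b ≠ c ∧ ¬ G.Adj a b ∧ ¬ G.Adj a c ∧ ¬ G.Adj b c

/-- For every `ε > 0` there is a connected, claw-free, cubic graph `G` with
`F_t(G)/F(G) > 2 - ε`: the bound `F_t(G)/F(G) ≤ 2` is asymptotically best possible. -/

def nAdj (k : ℕ) [NeZero k] (v w : Fin k × Fin 4) : Prop :=
  (v.1 = w.1 ∧ (v.2 = 0 ∧ w.2 = 2 ∨ v.2 = 2 ∧ w.2 = 0 ∨ v.2 = 0 ∧ w.2 = 3 ∨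
    v.2 = 3 ∧ w.2 = 0 ∨ v.2 = 1 ∧ w.2 = 2 ∨ v.2 = 2 ∧ w.2 = 1 ∨ v.2 = 1 ∧ w.2 = 3 ∨
    v.2 = 3 ∧ w.2 = 1 ∨ v.2 = 2 ∧ w.2 = 3 ∨ v.2 = 3 ∧ w.2 = 2))
  ∨ (w.1 = v.1 + 1 ∧ v.2 = 1 ∧ w.2 = 0)
  ∨ (v.1 = w.1 + 1 ∧ w.2 = 1 ∧ v.2 = 0)

def NG (k : ℕ) [NeZero k] : SimpleGraph (Fin k × Fin 4) where
  Adj := nAdj k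
  symm := by
    constructor
    intro v w h
    unfold nAdj at *
    rcases h with ⟨h1, h⟩ | h | h
    · refine Or.inl ⟨h1.symm, ?_⟩
      rcases h with h|h|h|h|h|h|h|h|h|h
      exacts [Or.inr (Or.inl ⟨h.2, h.1⟩), Or.inl ⟨h.2, h.1⟩,
        Or.inr (Or.inr (Or.inr (Or.inl ⟨h.2, h.1⟩))), Or.inr (Or.inr (Or.inl ⟨h.2, h.1⟩)),
        Or.inr (Or.inr (Or.inr (Or.inr (Or.inr (Or.inl ⟨h.2, h.1⟩))))),
        Or.inr (Or.inr (Or.inr (Or.inr (Or.inl ⟨h.2, h.1⟩)))),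
        Or.inr (Or.inr (Or.inr (Or.inr (Or.inr (Or.inr (Or.inr (Or.inl ⟨h.2, h.1⟩))))))),
        Or.inr (Or.inr (Or.inr (Or.inr (Or.inr (Or.inr (Or.inl ⟨h.2, h.1⟩)))))),
        Or.inr (Or.inr (Or.inr (Or.inr (Or.inr (Or.inr (Or.inr (Or.inr (Or.inr ⟨h.2, h.1⟩)))))))),
        Or.inr (Or.inr (Or.inr (Or.inr (Or.inr (Or.inr (Or.inr (Or.inr (Or.inl ⟨h.2, h.1⟩))))))))]
    · exact Or.inr (Or.inr h)
    · exact Or.inr (Or.inl h)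
  loopless := by
    constructor
    intro v h
    unfold nAdj at h
    rcases h with ⟨-, h⟩ | ⟨-, h1, h2⟩ | ⟨-, h1, h2⟩
    · rcases h with ⟨a,b⟩|⟨a,b⟩|⟨a,b⟩|⟨a,b⟩|⟨a,b⟩|⟨a,b⟩|⟨a,b⟩|⟨a,b⟩|⟨a,b⟩|⟨a,b⟩ <;>
        (rw [a] at b; simp at b)
    · rw [h1] at h2; simp at h2
    · rw [h1] at h2; simp at h2

variable {k : ℕ} [NeZero k]

lemma j4 (j : Fin 4) : j = 0 ∨ j = 1 ∨ j = 2 ∨ j = 3 := by omega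

lemma adj0 (i : Fin k) (u : Fin k × Fin 4) :
    (NG k).Adj (i, 0) u ↔ u = (i, 2) ∨ u = (i, 3) ∨ u = (i - 1, 1) := by
  show nAdj k _ _ ↔ _
  unfold nAdj
  constructor
  · rintro (⟨h1, h⟩ | ⟨h1, h2, h3⟩ | ⟨h1, h2, h3⟩)
    · rcases h with ⟨-,h2⟩|⟨h0,-⟩|⟨-,h2⟩|⟨h0,-⟩|⟨h0,-⟩|⟨h0,-⟩|⟨h0,-⟩|⟨h0,-⟩|⟨h0,-⟩|⟨h0,-⟩
      · exact Or.inl (Prod.ext h1.symm h2)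
      · exact absurd h0 (by simp)
      · exact Or.inr (Or.inl (Prod.ext h1.symm h2))
      all_goals exact absurd h0 (by simp)
    · exact absurd h2 (by simp)
    · refine Or.inr (Or.inr (Prod.ext ?_ h2))
      have h1' : i = u.1 + 1 := h1
      show u.1 = i - 1
      rw [h1', add_sub_cancel_right]
  · rintro (rfl | rfl | rfl)
    · exact Or.inl ⟨rfl, Or.inl ⟨rfl, rfl⟩⟩
    · exact Or.inl ⟨rfl, Or.inr (Or.inr (Or.inl ⟨rfl, rfl⟩))⟩
    · exact Or.inr (Or.inr ⟨(sub_add_cancel i 1).symm, rfl, rfl⟩)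

lemma adj1 (i : Fin k) (u : Fin k × Fin 4) :
    (NG k).Adj (i, 1) u ↔ u = (i, 2) ∨ u = (i, 3) ∨ u = (i + 1, 0) := by
  show nAdj k _ _ ↔ _
  unfold nAdj
  constructor
  · rintro (⟨h1, h⟩ | ⟨h1, h2, h3⟩ | ⟨h1, h2, h3⟩)
    · rcases h with ⟨h0,-⟩|⟨h0,-⟩|⟨h0,-⟩|⟨h0,-⟩|⟨-,h2⟩|⟨h0,-⟩|⟨-,h2⟩|⟨h0,-⟩|⟨h0,-⟩|⟨h0,-⟩
      case mp.inl.inr.inr.inr.inr.inl => exact Or.inl (Prod.ext h1.symm h2)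
      case mp.inl.inr.inr.inr.inr.inr.inr.inl =>
        exact Or.inr (Or.inl (Prod.ext h1.symm h2))
      all_goals exact absurd h0 (by simp)
    · exact Or.inr (Or.inr (Prod.ext h1 h3))
    · exact absurd h3 (by simp)
  · rintro (rfl | rfl | rfl)
    · exact Or.inl ⟨rfl, Or.inr (Or.inr (Or.inr (Or.inr (Or.inl ⟨rfl, rfl⟩))))⟩
    · exact Or.inl ⟨rfl, Or.inr (Or.inr (Or.inr (Or.inr (Or.inr (Or.inr (Or.inl ⟨rfl, rfl⟩))))))⟩
    · exact Or.inr (Or.inl ⟨rfl, rfl, rfl⟩)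

lemma adj2 (i : Fin k) (u : Fin k × Fin 4) :
    (NG k).Adj (i, 2) u ↔ u = (i, 0) ∨ u = (i, 1) ∨ u = (i, 3) := by
  show nAdj k _ _ ↔ _
  unfold nAdj
  constructor
  · rintro (⟨h1, h⟩ | ⟨h1, h2, h3⟩ | ⟨h1, h2, h3⟩)
    · rcases h with ⟨h0,-⟩|⟨-,h2⟩|⟨h0,-⟩|⟨h0,-⟩|⟨h0,-⟩|⟨-,h2⟩|⟨h0,-⟩|⟨h0,-⟩|⟨-,h2⟩|⟨h0,-⟩
      case mp.inl.inr.inl => exact Or.inl (Prod.ext h1.symm h2)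
      case mp.inl.inr.inr.inr.inr.inr.inl => exact Or.inr (Or.inl (Prod.ext h1.symm h2))
      case mp.inl.inr.inr.inr.inr.inr.inr.inr.inr.inl =>
        exact Or.inr (Or.inr (Prod.ext h1.symm h2))
      all_goals exact absurd h0 (by simp)
    · exact absurd h2 (by simp)
    · exact absurd h3 (by simp)
  · rintro (rfl | rfl | rfl)
    · exact Or.inl ⟨rfl, Or.inr (Or.inl ⟨rfl, rfl⟩)⟩
    · exact Or.inl ⟨rfl, Or.inr (Or.inr (Or.inr (Or.inr (Or.inr (Or.inl ⟨rfl, rfl⟩)))))⟩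
    · exact Or.inl ⟨rfl, Or.inr (Or.inr (Or.inr (Or.inr (Or.inr (Or.inr (Or.inr (Or.inr (Or.inl ⟨rfl, rfl⟩))))))))⟩

lemma adj3 (i : Fin k) (u : Fin k × Fin 4) :
    (NG k).Adj (i, 3) u ↔ u = (i, 0) ∨ u = (i, 1) ∨ u = (i, 2) := by
  show nAdj k _ _ ↔ _
  unfold nAdj
  constructor
  · rintro (⟨h1, h⟩ | ⟨h1, h2, h3⟩ | ⟨h1, h2, h3⟩)
    · rcases h with ⟨h0,-⟩|⟨h0,-⟩|⟨h0,-⟩|⟨-,h2⟩|⟨h0,-⟩|⟨h0,-⟩|⟨h0,-⟩|⟨-,h2⟩|⟨h0,-⟩|⟨-,h2⟩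
      case mp.inl.inr.inr.inr.inl => exact Or.inl (Prod.ext h1.symm h2)
      case mp.inl.inr.inr.inr.inr.inr.inr.inr.inl =>
        exact Or.inr (Or.inl (Prod.ext h1.symm h2))
      case mp.inl.inr.inr.inr.inr.inr.inr.inr.inr.inr =>
        exact Or.inr (Or.inr (Prod.ext h1.symm h2))
      all_goals exact absurd h0 (by simp)
    · exact absurd h2 (by simp)
    · exact absurd h3 (by simp)
  · rintro (rfl | rfl | rfl)
    · exact Or.inl ⟨rfl, Or.inr (Or.inr (Or.inr (Or.inl ⟨rfl, rfl⟩)))⟩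
    · exact Or.inl ⟨rfl, Or.inr (Or.inr (Or.inr (Or.inr (Or.inr (Or.inr (Or.inr (Or.inl ⟨rfl, rfl⟩)))))))⟩
    · exact Or.inl ⟨rfl, Or.inr (Or.inr (Or.inr (Or.inr (Or.inr (Or.inr (Or.inr (Or.inr (Or.inr ⟨rfl, rfl⟩))))))))⟩


lemma ncard3 {α : Type*} (a b c : α) (h1 : a ≠ b) (h2 : a ≠ c) (h3 : b ≠ c) :
    ({a, b, c} : Set α).ncard = 3 := by
  rw [Set.ncard_insert_of_notMem (by simp [h1, h2]) (Set.toFinite _), Set.ncard_pair h3]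

lemma cubicNG : ∀ v, ((NG k).neighborSet v).ncard = 3 := by
  rintro ⟨i, j⟩
  rcases j4 j with rfl | rfl | rfl | rfl
  · have h : (NG k).neighborSet (i, 0) = {(i,2),(i,3),(i-1,1)} :=
      Set.ext fun u => by rw [SimpleGraph.mem_neighborSet, adj0]; simp
    rw [h]; exact ncard3 _ _ _ (by simp) (by simp) (by simp)
  · have h : (NG k).neighborSet (i, 1) = {(i,2),(i,3),(i+1,0)} :=
      Set.ext fun u => by rw [SimpleGraph.mem_neighborSet, adj1]; simp
    rw [h]; exact ncard3 _ _ _ (by simp) (by simp) (by simp)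
  · have h : (NG k).neighborSet (i, 2) = {(i,0),(i,1),(i,3)} :=
      Set.ext fun u => by rw [SimpleGraph.mem_neighborSet, adj2]; simp
    rw [h]; exact ncard3 _ _ _ (by simp) (by simp) (by simp)
  · have h : (NG k).neighborSet (i, 3) = {(i,0),(i,1),(i,2)} :=
      Set.ext fun u => by rw [SimpleGraph.mem_neighborSet, adj3]; simp
    rw [h]; exact ncard3 _ _ _ (by simp) (by simp) (by simp)

lemma clawfreeNG : ClawFree (NG k) := by
  rintro ⟨⟨i, j⟩, a, b, c, hva, hvb, hvc, hab, hac, hbc, nab, nac, nbc⟩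
  rcases j4 j with rfl | rfl | rfl | rfl
  · have hxy : (NG k).Adj (i,2) (i,3) := (adj2 i (i,3)).mpr (Or.inr (Or.inr rfl))
    rcases (adj0 i a).mp hva with rfl | rfl | rfl <;>
    rcases (adj0 i b).mp hvb with rfl | rfl | rfl <;>
    rcases (adj0 i c).mp hvc with rfl | rfl | rfl <;>
      first
      | exact hab rfl | exact hac rfl | exact hbc rfl
      | exact nab hxy | exact nab hxy.symm | exact nac hxy | exact nac hxy.symm
      | exact nbc hxy | exact nbc hxy.symm
  · have hxy : (NG k).Adj (i,2) (i,3) := (adj2 i (i,3)).mpr (Or.inr (Or.inr rfl))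
    rcases (adj1 i a).mp hva with rfl | rfl | rfl <;>
    rcases (adj1 i b).mp hvb with rfl | rfl | rfl <;>
    rcases (adj1 i c).mp hvc with rfl | rfl | rfl <;>
      first
      | exact hab rfl | exact hac rfl | exact hbc rfl
      | exact nab hxy | exact nab hxy.symm | exact nac hxy | exact nac hxy.symm
      | exact nbc hxy | exact nbc hxy.symm
  · have hxy : (NG k).Adj (i,0) (i,3) := (adj0 i (i,3)).mpr (Or.inr (Or.inl rfl))
    rcases (adj2 i a).mp hva with rfl | rfl | rfl <;>
    rcases (adj2 i b).mp hvb with rfl | rfl | rfl <;>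
    rcases (adj2 i c).mp hvc with rfl | rfl | rfl <;>
      first
      | exact hab rfl | exact hac rfl | exact hbc rfl
      | exact nab hxy | exact nab hxy.symm | exact nac hxy | exact nac hxy.symm
      | exact nbc hxy | exact nbc hxy.symm
  · have hxy : (NG k).Adj (i,0) (i,2) := (adj0 i (i,2)).mpr (Or.inl rfl)
    rcases (adj3 i a).mp hva with rfl | rfl | rfl <;>
    rcases (adj3 i b).mp hvb with rfl | rfl | rfl <;>
    rcases (adj3 i c).mp hvc with rfl | rfl | rfl <;>
      first
      | exact hab rfl | exact hac rfl | exact hbc rfl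
      | exact nab hxy | exact nab hxy.symm | exact nac hxy | exact nac hxy.symm
      | exact nbc hxy | exact nbc hxy.symm

lemma reach_center (i : Fin k) (j : Fin 4) : (NG k).Reachable (i, j) (i, 2) := by
  rcases j4 j with rfl | rfl | rfl | rfl
  · exact ((adj0 i (i,2)).mpr (Or.inl rfl)).reachable
  · exact ((adj1 i (i,2)).mpr (Or.inl rfl)).reachable
  · exact SimpleGraph.Reachable.refl _
  · exact ((adj3 i (i,2)).mpr (Or.inr (Or.inr rfl))).reachable

lemma reach_zero : ∀ (m : ℕ) (h : m < k), (NG k).Reachable (0, 2) (⟨m, h⟩, 2) := by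
  intro m
  induction m with
  | zero =>
    intro h
    rw [show (⟨0, h⟩ : Fin k) = 0 from Fin.ext (by simp)]
  | succ n ih =>
    intro h
    have hn : n < k := Nat.lt_of_succ_lt h
    have e : (⟨n, hn⟩ : Fin k) + 1 = ⟨n + 1, h⟩ := by
      apply Fin.ext
      simp [Fin.val_add, Fin.val_one', Nat.mod_eq_of_lt, h, Nat.mod_eq_of_lt (Nat.lt_of_le_of_lt (Nat.le_add_left 1 n) h)]
    refine (ih hn).trans ?_
    have h1 : (NG k).Adj (⟨n, hn⟩, 2) (⟨n, hn⟩, 1) := (adj2 _ _).mpr (Or.inr (Or.inl rfl))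
    have h2 : (NG k).Adj (⟨n, hn⟩, 1) ((⟨n, hn⟩ : Fin k) + 1, 0) :=
      (adj1 _ _).mpr (Or.inr (Or.inr rfl))
    rw [e] at h2
    exact (h1.reachable.trans h2.reachable).trans (reach_center _ _)

lemma connectedNG : (NG k).Connected := by
  rw [SimpleGraph.connected_iff]
  refine ⟨?_, ⟨(0, 0)⟩⟩
  rintro ⟨i, j⟩ ⟨i', j'⟩
  refine (reach_center i j).trans (SimpleGraph.Reachable.trans ?_ (reach_center i' j').symm)
  have := reach_zero (k := k) i.1 i.2
  have := reach_zero (k := k) i'.1 i'.2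
  simp only [Fin.eta] at *
  exact (by assumption : (NG k).Reachable (0,2) (i,2)).symm.trans (by assumption)


lemma mk_succ (n : ℕ) (hn : n < k) (h : n + 1 < k) :
    (⟨n, hn⟩ : Fin k) + 1 = ⟨n + 1, h⟩ := by
  apply Fin.ext
  simp [Fin.val_add, Fin.val_one', Nat.mod_eq_of_lt, h,
    Nat.mod_eq_of_lt (Nat.lt_of_le_of_lt (Nat.le_add_left 1 n) h)]

def S0 (k : ℕ) [NeZero k] : Set (Fin k × Fin 4) :=
  insert (0, 0) (insert (0, 3) {v : Fin k × Fin 4 | v.2 = 2})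

lemma S0_ncard : (S0 k).ncard = k + 2 := by
  have hC : {v : Fin k × Fin 4 | v.2 = 2} = (fun i : Fin k => (i, 2)) '' Set.univ := by
    ext ⟨i, j⟩
    simp only [Set.mem_setOf_eq, Set.image_univ, Set.mem_range, Prod.mk.injEq]
    constructor
    · rintro rfl; exact ⟨i, rfl, rfl⟩
    · rintro ⟨i', rfl, rfl⟩; rfl
  have hCcard : {v : Fin k × Fin 4 | v.2 = 2}.ncard = k := by
    rw [hC, Set.ncard_image_of_injective _ (fun a b hab => (Prod.mk.injEq _ _ _ _).mp hab |>.1),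
      Set.ncard_univ, Nat.card_eq_fintype_card, Fintype.card_fin]
  unfold S0
  rw [Set.ncard_insert_of_notMem (by simp [Prod.ext_iff]) (Set.toFinite _),
    Set.ncard_insert_of_notMem (by simp [Prod.ext_iff]) (Set.toFinite _), hCcard]

lemma forcing_S0 : IsForcingSet (NG k) (S0 k) := by
  intro T hST hT
  have h00 : ((0 : Fin k), (0 : Fin 4)) ∈ T := hST (Set.mem_insert _ _)
  have h03 : ((0 : Fin k), (3 : Fin 4)) ∈ T := hST (by right; left; rfl)
  have hC : ∀ i : Fin k, (i, (2 : Fin 4)) ∈ T := fun i => hST (by right; right; rfl)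
  have f1 : ∀ i : Fin k, (i, 0) ∈ T → (i, 3) ∈ T → (i, 1) ∈ T := by
    intro i h0 h3
    refine hT (i, 2) (hC i) (i, 1) ((adj2 i (i, 1)).mpr (Or.inr (Or.inl rfl))) ?_
    intro u hu hun
    rcases (adj2 i u).mp hu with rfl | rfl | rfl
    · exact absurd h0 hun
    · rfl
    · exact absurd h3 hun
  have f2 : ∀ i : Fin k, (i, 1) ∈ T → (i, 3) ∈ T → (i + 1, 0) ∈ T := by
    intro i h1 h3
    refine hT (i, 1) h1 (i + 1, 0) ((adj1 i _).mpr (Or.inr (Or.inr rfl))) ?_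
    intro u hu hun
    rcases (adj1 i u).mp hu with rfl | rfl | rfl
    · exact absurd (hC i) hun
    · exact absurd h3 hun
    · rfl
  have f3 : ∀ i : Fin k, (i, 0) ∈ T → (i - 1, 1) ∈ T → (i, 3) ∈ T := by
    intro i h0 h1
    refine hT (i, 0) h0 (i, 3) ((adj0 i _).mpr (Or.inr (Or.inl rfl))) ?_
    intro u hu hun
    rcases (adj0 i u).mp hu with rfl | rfl | rfl
    · exact absurd (hC i) hun
    · rfl
    · exact absurd h1 hun
  have main : ∀ m (h : m < k),
      (⟨m, h⟩, (0 : Fin 4)) ∈ T ∧ (⟨m, h⟩, (1 : Fin 4)) ∈ T ∧ (⟨m, h⟩, (3 : Fin 4)) ∈ T := by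
    intro m
    induction m with
    | zero =>
      intro h
      rw [show (⟨0, h⟩ : Fin k) = 0 from Fin.ext (by simp)]
      exact ⟨h00, f1 0 h00 h03, h03⟩
    | succ n ih =>
      intro h
      have hn : n < k := Nat.lt_of_succ_lt h
      obtain ⟨g0, g1, g3⟩ := ih hn
      have e := mk_succ (k := k) n hn h
      have p0 : ((⟨n + 1, h⟩ : Fin k), (0 : Fin 4)) ∈ T := by
        rw [← e]; exact f2 _ g1 g3
      have p3 : ((⟨n + 1, h⟩ : Fin k), (3 : Fin 4)) ∈ T := by
        refine f3 _ p0 ?_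
        rw [show (⟨n + 1, h⟩ : Fin k) - 1 = ⟨n, hn⟩ from by rw [← e, add_sub_cancel_right]]
        exact g1
      exact ⟨p0, f1 _ p0 p3, p3⟩
  rintro ⟨i, j⟩
  obtain ⟨m0, m1, m3⟩ := main i.1 i.2
  simp only [Fin.eta] at m0 m1 m3
  rcases j4 j with rfl | rfl | rfl | rfl
  exacts [m0, m1, hC i, m3]

lemma must_hit (S : Set (Fin k × Fin 4)) (hS : IsForcingSet (NG k) S) (i : Fin k) :
    (i, (2 : Fin 4)) ∈ S ∨ (i, (3 : Fin 4)) ∈ S := by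
  by_contra hcon
  push_neg at hcon
  set T : Set (Fin k × Fin 4) := {v | v ≠ (i, 2) ∧ v ≠ (i, 3)} with hTdef
  have hsub : S ⊆ T := by
    intro v hv
    constructor
    · rintro rfl; exact hcon.1 hv
    · rintro rfl; exact hcon.2 hv
  have hclosed : ForcingClosed (NG k) T := by
    intro v hv w hadj honly
    constructor
    · rintro rfl
      rcases (adj2 i v).mp hadj.symm with rfl | rfl | rfl
      · have := honly (i, 3) ((adj0 i _).mpr (Or.inr (Or.inl rfl))) (fun hc => hc.2 rfl)
        simp at this
      · have := honly (i, 3) ((adj1 i _).mpr (Or.inr (Or.inl rfl))) (fun hc => hc.2 rfl)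
        simp at this
      · exact hv.2 rfl
    · rintro rfl
      rcases (adj3 i v).mp hadj.symm with rfl | rfl | rfl
      · have := honly (i, 2) ((adj0 i _).mpr (Or.inl rfl)) (fun hc => hc.1 rfl)
        simp at this
      · have := honly (i, 2) ((adj1 i _).mpr (Or.inl rfl)) (fun hc => hc.1 rfl)
        simp at this
      · exact hv.1 rfl
  exact (hS T hsub hclosed (i, 2)).1 rfl

lemma two_per_diamond (S : Set (Fin k × Fin 4)) (hS : IsTotalForcingSet (NG k) S)
    (i : Fin k) : ∃ x y, x ∈ S ∧ y ∈ S ∧ x.1 = i ∧ y.1 = i ∧ x ≠ y := by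
  rcases must_hit S hS.1 i with hx | hx
  · obtain ⟨y, hy, hadj⟩ := hS.2 _ hx
    refine ⟨(i, 2), y, hx, hy, rfl, ?_, fun hc => (NG k).irrefl (hc ▸ hadj)⟩
    rcases (adj2 i y).mp hadj with rfl | rfl | rfl <;> rfl
  · obtain ⟨y, hy, hadj⟩ := hS.2 _ hx
    refine ⟨(i, 3), y, hx, hy, rfl, ?_, fun hc => (NG k).irrefl (hc ▸ hadj)⟩
    rcases (adj3 i y).mp hadj with rfl | rfl | rfl <;> rfl

lemma tfs_card (S : Set (Fin k × Fin 4)) (hS : IsTotalForcingSet (NG k) S) :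
    2 * k ≤ S.ncard := by
  classical
  have hfin : S.Finite := Set.toFinite S
  rw [Set.ncard_eq_toFinset_card S hfin]
  rw [Finset.card_eq_sum_card_fiberwise
    (f := Prod.fst) (t := Finset.univ) (fun x _ => Finset.mem_univ _)]
  have hbound : ∀ i : Fin k, 2 ≤ (hfin.toFinset.filter (fun v => v.1 = i)).card := by
    intro i
    obtain ⟨x, y, hx, hy, hxi, hyi, hxy⟩ := two_per_diamond S hS i
    rw [Nat.succ_le_iff, Finset.one_lt_card]
    exact ⟨x, Finset.mem_filter.mpr ⟨hfin.mem_toFinset.mpr hx, hxi⟩,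
      y, Finset.mem_filter.mpr ⟨hfin.mem_toFinset.mpr hy, hyi⟩, hxy⟩
  calc 2 * k = ∑ _i : Fin k, 2 := by simp [mul_comm]
  _ ≤ _ := Finset.sum_le_sum (fun i _ => hbound i)


lemma univ_tfs : IsTotalForcingSet (NG k) Set.univ := by
  constructor
  · intro T h _ v; exact h (Set.mem_univ v)
  · rintro ⟨i, j⟩ -
    rcases j4 j with rfl | rfl | rfl | rfl
    · exact ⟨(i, 2), Set.mem_univ _, (adj0 i _).mpr (Or.inl rfl)⟩
    · exact ⟨(i, 2), Set.mem_univ _, (adj1 i _).mpr (Or.inl rfl)⟩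
    · exact ⟨(i, 3), Set.mem_univ _, (adj2 i _).mpr (Or.inr (Or.inr rfl))⟩
    · exact ⟨(i, 2), Set.mem_univ _, (adj3 i _).mpr (Or.inr (Or.inr rfl))⟩

theorem ratio_totalForcing_forcing_asymptotically_two :
    ∀ ε : ℝ, 0 < ε → ∃ (V : Type) (_ : Fintype V) (G : SimpleGraph V),
      G.Connected ∧ ClawFree G ∧ IsCubic G ∧
      (2 : ℝ) - ε < (totalForcingNumber G : ℝ) / (forcingNumber G : ℝ) := by
  intro ε hε
  set k : ℕ := ⌈4 / ε⌉₊ + 1 with hkdef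
  haveI : NeZero k := ⟨Nat.succ_ne_zero _⟩
  refine ⟨Fin k × Fin 4, inferInstance, NG k, connectedNG, clawfreeNG, cubicNG, ?_⟩
  set F := forcingNumber (NG k) with hF
  set Ft := totalForcingNumber (NG k) with hFtdef
  have hmemF : (k + 2) ∈ {n : ℕ | ∃ S, IsForcingSet (NG k) S ∧ S.ncard = n} :=
    ⟨S0 k, forcing_S0, S0_ncard⟩
  have hFle : F ≤ k + 2 := Nat.sInf_le hmemF
  have hFtge : 2 * k ≤ Ft := by
    refine le_csInf ⟨Set.univ.ncard, Set.univ, univ_tfs, rfl⟩ ?_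
    rintro b ⟨S, hS, rfl⟩
    exact tfs_card S hS
  have hF1 : 1 ≤ F := by
    rcases Nat.eq_zero_or_pos F with h0 | h; swap
    · exact h
    obtain ⟨S, hS, hcard⟩ := Nat.sInf_mem (⟨_, hmemF⟩ :
      {n : ℕ | ∃ S, IsForcingSet (NG k) S ∧ S.ncard = n}.Nonempty)
    rw [(Set.ncard_eq_zero (Set.toFinite S)).mp (hcard.trans h0)] at hS
    exact absurd (hS ∅ subset_rfl (fun v hv => absurd hv (Set.notMem_empty v)) (0, 0))
      (Set.notMem_empty _)
  have hFpos : (0 : ℝ) < (F : ℝ) := by exact_mod_cast hF1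
  rw [lt_div_iff₀ hFpos]
  have hc1 : (F : ℝ) ≤ (k : ℝ) + 2 := by exact_mod_cast hFle
  have hc2 : 2 * (k : ℝ) ≤ (Ft : ℝ) := by exact_mod_cast hFtge
  have hkge : 4 / ε ≤ (k : ℝ) :=
    le_trans (Nat.le_ceil _) (by exact_mod_cast Nat.le_succ _)
  have hk4 : 4 ≤ ε * (k : ℝ) := by
    rw [div_le_iff₀ hε] at hkge; linarith
  have hkpos : (0 : ℝ) < (k : ℝ) := by positivity
  rcases le_or_gt (2 - ε) 0 with h | h
  · have h1 : (2 - ε) * (F : ℝ) ≤ 0 := mul_nonpos_of_nonpos_of_nonneg h hFpos.le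
    nlinarith
  · have h1 : (2 - ε) * (F : ℝ) ≤ (2 - ε) * ((k : ℝ) + 2) :=
      mul_le_mul_of_nonneg_left hc1 h.le
    nlinarith
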